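/- Fix a real number b ≥ 0. Define S(n) = Σ_{k=1}^∞ [ (1 - (2b+1)/(2k+b+1))^n - 1 + n(2b+1)/(2k+b+1) ]. Then there exists a constant C (depending on b) such that for all sufficiently large n, S(n) ≥ ((2b+1)/2)·(n·log n + n·γ - n + n·log(2 - 5/(b+3))) - C. -/

import Mathlib

open Finset Real

set_option maxHeartbeats 1000000


lemma sum_id3 (n : ℕ) :
    ∑ j ∈ range (n+1), (-1:ℝ)^j * (n.choose j) / (j+1) = 1/(n+1) := by
  have key : ∑ j ∈ range (n+1), (-1:ℝ)^j * ((n+1).choose (j+1)) = 1 := by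
    have h := Int.alternating_sum_range_choose (n := n+1)
    rw [if_neg (Nat.succ_ne_zero n)] at h
    have h2 := Finset.sum_range_succ' (fun m => (-1:ℤ)^m * ((n+1).choose m)) (n+1)
    rw [h] at h2
    simp only [pow_succ, pow_zero, one_mul, Nat.choose_zero_right, Nat.cast_one] at h2
    have hz : ∑ i ∈ range (n+1), (-1:ℤ)^i * ((n+1).choose (i+1)) = 1 := by
      have h4 : ∑ i ∈ range (n+1), (-1:ℤ)^i * ((n+1).choose (i+1))
          = - ∑ i ∈ range (n+1), (-1:ℤ)^i * (-1) * ((n+1).choose (i+1)) := by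
        rw [← Finset.sum_neg_distrib]
        refine Finset.sum_congr rfl fun i _ => by ring
      omega
    calc ∑ j ∈ range (n+1), (-1:ℝ)^j * ((n+1).choose (j+1))
        = ((∑ i ∈ range (n+1), (-1:ℤ)^i * ((n+1).choose (i+1)) : ℤ) : ℝ) := by
          push_cast; ring
      _ = 1 := by rw [hz]; norm_num
  have hcast : ∀ j ∈ range (n+1), (-1:ℝ)^j * (n.choose j) / (j+1)
      = (1/(n+1)) * ((-1:ℝ)^j * ((n+1).choose (j+1))) := by
    intro j hj
    have h := Nat.add_one_mul_choose_eq n j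
    have h' : ((n:ℝ)+1) * (n.choose j) = ((n+1).choose (j+1)) * ((j:ℝ)+1) := by
      exact_mod_cast congrArg (fun m : ℕ => (m:ℝ)) h
    have hj1 : ((j:ℝ)+1) ≠ 0 := by positivity
    have hn1 : ((n:ℝ)+1) ≠ 0 := by positivity
    have hs : (-1:ℝ)^j * (n.choose j) = (-1:ℝ)^j * (((n+1).choose (j+1)) * ((j:ℝ)+1) / ((n:ℝ)+1)) := by
      rw [← h']; field_simp
    rw [hs]; field_simp
  rw [Finset.sum_congr rfl hcast, ← Finset.mul_sum, key, mul_one]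


noncomputable def Hn (n : ℕ) : ℝ := ∑ i ∈ range n, (1:ℝ)/(i+1)


lemma sum_id2 (n : ℕ) :
    ∑ j ∈ range n, (-1:ℝ)^j * (n.choose (j+1)) / (j+1) = Hn n := by
  induction n with
  | zero => simp [Hn]
  | succ n ih =>
    have split : ∀ j ∈ range (n+1), (-1:ℝ)^j * ((n+1).choose (j+1)) / (j+1)
        = (-1:ℝ)^j * (n.choose j) / (j+1) + (-1:ℝ)^j * (n.choose (j+1)) / (j+1) := by
      intro j hj
      rw [Nat.choose_succ_succ]
      push_cast; ring
    rw [Finset.sum_congr rfl split, Finset.sum_add_distrib, sum_id3 n,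
      Finset.sum_range_succ, Nat.choose_succ_self]
    simp only [Nat.cast_zero, mul_zero, zero_div, add_zero]
    rw [ih, Hn, Hn, Finset.sum_range_succ]
    push_cast; ring

lemma sum_id (n : ℕ) :
    ∑ j ∈ range n, (-1:ℝ)^j * ((n+1).choose (j+2)) / (j+1) = (n+1) * Hn (n+1) - (n+1) := by
  induction n with
  | zero => simp [Hn]
  | succ n ih =>
    have split : ∀ j ∈ range (n+1), (-1:ℝ)^j * ((n+2).choose (j+2)) / (j+1)
        = (-1:ℝ)^j * ((n+1).choose (j+1)) / (j+1) + (-1:ℝ)^j * ((n+1).choose (j+2)) / (j+1) := by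
      intro j hj
      rw [show n+2 = (n+1)+1 from rfl, Nat.choose_succ_succ (n+1) (j+1)]
      push_cast; ring
    rw [Finset.sum_congr rfl split, Finset.sum_add_distrib, sum_id2 (n+1),
      Finset.sum_range_succ, ih, Nat.choose_succ_self]
    simp only [Nat.cast_zero, mul_zero, zero_div, add_zero]
    have hH : Hn (n+2) = Hn (n+1) + 1/((n:ℝ)+2) := by
      rw [Hn, Hn, Finset.sum_range_succ]; push_cast; ring
    have h2 : ((n:ℝ)+2) ≠ 0 := by positivity
    have hH' : Hn (n+1+1) = Hn (n+1) + 1/((n:ℝ)+2) := hH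
    simp only [hH, hH']
    push_cast
    field_simp
    ring


noncomputable def Gf (n : ℕ) (u : ℝ) : ℝ := ∑ j ∈ range (n-1), (-1:ℝ)^j * (n.choose (j+2)) * u^j

lemma Gf_cont (n : ℕ) : Continuous (Gf n) := by
  unfold Gf
  exact continuous_finset_sum _ fun j _ => by continuity

lemma gG (n : ℕ) (u : ℝ) : (1-u)^n - 1 + n*u = u^2 * Gf n u := by
  match n with
  | 0 => simp [Gf]
  | 1 => simp [Gf]
  | (m+2) =>
    have hbin : (1-u)^(m+2) = ∑ i ∈ range (m+3), (-u)^i * 1^(m+2-i) * ((m+2).choose i) := by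
      rw [show (1-u) = (-u) + 1 by ring, add_pow]
    rw [hbin, Finset.sum_range_succ' (fun i => (-u)^i * 1^(m+2-i) * (((m+2).choose i : ℕ) : ℝ)) (m+2),
      Finset.sum_range_succ' (fun i => (-u)^(i+1) * 1^(m+2-(i+1)) * (((m+2).choose (i+1) : ℕ) : ℝ)) (m+1)]
    simp only [pow_zero, one_mul, one_pow, mul_one, Nat.choose_zero_right, Nat.cast_one,
      Nat.choose_one_right, pow_one]
    rw [Gf, show m+2-1 = m+1 from rfl, Finset.mul_sum]
    have : ∀ j ∈ range (m+1), (-u)^(j+1+1) * (((m+2).choose (j+1+1) : ℕ) : ℝ)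
        = u^2 * ((-1:ℝ)^j * ((m+2).choose (j+2)) * u^j) := by
      intro j hj
      rw [show j+1+1 = j+2 from rfl, neg_pow]
      ring
    rw [Finset.sum_congr rfl this, Nat.choose_one_right]
    push_cast
    ring


lemma g_nonneg (n : ℕ) {u : ℝ} (h : u ≤ 2) : 0 ≤ (1-u)^n - 1 + n*u := by
  have := one_add_mul_le_pow (by linarith : (-2:ℝ) ≤ -u) n
  have h2 : (1 + -u) = 1 - u := by ring
  rw [h2] at this
  linarith

lemma g_pow_le (n : ℕ) {u : ℝ} (h0 : 0 ≤ u) (h1 : u ≤ 1) :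
    (1-u)^n ≤ 1 - n*u + (n^2/2)*u^2 := by
  induction n with
  | zero => norm_num
  | succ n ih =>
    have hu : (0:ℝ) ≤ 1 - u := by linarith
    have : (1-u)^(n+1) = (1-u)^n * (1-u) := by ring
    rw [this]
    have h3 : (1-u)^n * (1-u) ≤ (1 - n*u + (n^2/2)*u^2) * (1-u) := by
      apply mul_le_mul_of_nonneg_right ih hu
    refine h3.trans ?_
    push_cast
    nlinarith [sq_nonneg u, mul_nonneg (mul_nonneg (sq_nonneg u) h0) (Nat.cast_nonneg (α := ℝ) n), sq_nonneg ((n:ℝ)*u)]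

lemma g_le2 (n : ℕ) {u : ℝ} (h0 : 0 ≤ u) (h2 : u ≤ 2) :
    (1-u)^n - 1 + n*u ≤ (n:ℝ)^2*u^2 := by
  rcases le_or_gt u 1 with h1 | h1
  · have := g_pow_le n h0 h1
    nlinarith [sq_nonneg u, Nat.cast_nonneg (α := ℝ) n]
  · rcases Nat.eq_zero_or_pos n with rfl | hn
    · norm_num
    have habs : (1-u)^n ≤ 1 := by
      calc (1-u)^n ≤ |(1-u)^n| := le_abs_self _
        _ = |1-u|^n := by rw [abs_pow]
        _ ≤ 1 := pow_le_one₀ (abs_nonneg _) (by rw [abs_le]; constructor <;> linarith)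
    have hn1 : (1:ℝ) ≤ n := by exact_mod_cast hn
    have key : 0 ≤ ((n:ℝ)*u) * ((n:ℝ)*u - 1) := mul_nonneg (by positivity) (by nlinarith)
    nlinarith

lemma g_mono (n : ℕ) : MonotoneOn (fun u : ℝ => (1-u)^n - 1 + n*u) (Set.Icc 0 2) := by
  have hderiv : ∀ u : ℝ, HasDerivAt (fun u : ℝ => (1-u)^n - 1 + n*u)
      ((n:ℝ) * (1-u)^(n-1) * (-1) + n) u := by
    intro u
    have h1 : HasDerivAt (fun u : ℝ => 1 - u) (-1) u := (hasDerivAt_id u).const_sub 1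
    have h2 := h1.pow n
    have h3 : HasDerivAt (fun u : ℝ => (n:ℝ)*u) n u := by
      simpa using (hasDerivAt_id u).const_mul (n:ℝ)
    exact (h2.sub_const 1).add h3
  apply monotoneOn_of_deriv_nonneg (convex_Icc 0 2)
  · exact Continuous.continuousOn (by continuity)
  · intro x hx
    exact ((hderiv x).differentiableAt).differentiableWithinAt
  · intro x hx
    rw [interior_Icc] at hx
    rw [(hderiv x).deriv]
    have habs : (1-x)^(n-1) ≤ 1 := by
      calc (1-x)^(n-1) ≤ |(1-x)^(n-1)| := le_abs_self _
        _ = |1-x|^(n-1) := by rw [abs_pow]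
        _ ≤ 1 := pow_le_one₀ (abs_nonneg _) (by rw [abs_le]; constructor <;> [linarith [hx.2]; linarith [hx.1]])
    nlinarith [Nat.cast_nonneg (α := ℝ) n]


lemma int_Gf_01 (n : ℕ) (hn : 1 ≤ n) : ∫ u in (0:ℝ)..1, Gf n u = n * Hn n - n := by
  obtain ⟨m, rfl⟩ : ∃ m, n = m + 1 := ⟨n - 1, by omega⟩
  have h1 : ∫ u in (0:ℝ)..1, Gf (m+1) u
      = ∑ j ∈ range m, ∫ u in (0:ℝ)..1, (-1:ℝ)^j * ((m+1).choose (j+2)) * u^j := by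
    simp only [Gf, show (m+1) - 1 = m from rfl]
    exact intervalIntegral.integral_finset_sum fun j hj =>
      (Continuous.intervalIntegrable (by continuity) _ _)
  have h2 : ∀ j ∈ range m, (∫ u in (0:ℝ)..1, (-1:ℝ)^j * ((m+1).choose (j+2)) * u^j)
      = (-1:ℝ)^j * ((m+1).choose (j+2)) / (j+1) := by
    intro j hj
    rw [intervalIntegral.integral_const_mul, integral_pow]
    rw [one_pow, zero_pow (Nat.succ_ne_zero j)]
    push_cast; ring
  rw [h1, Finset.sum_congr rfl h2, sum_id m]
  push_cast; ring

lemma Gf_zero (n : ℕ) : Gf n 0 = (n.choose 2 : ℝ) := by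
  match n with
  | 0 => simp [Gf]
  | 1 => simp [Gf]
  | (m+2) =>
    rw [Gf]
    rw [Finset.sum_eq_single 0]
    · norm_num
    · intro j _ hj
      rw [zero_pow hj]; ring
    · intro h
      simp at h

lemma Gf_le_half (n : ℕ) : ∀ u ∈ Set.Icc (0:ℝ) 1, Gf n u ≤ (n:ℝ)^2/2 := by
  intro u hu
  rcases eq_or_lt_of_le hu.1 with h | h
  · rw [← h, Gf_zero]
    have h1 : 2 * (n.choose 2) ≤ n^2 := by
      rw [Nat.choose_two_right]
      calc 2 * (n * (n-1) / 2) ≤ n * (n-1) := Nat.mul_div_le _ 2 |>.trans_eq (by ring_nf) |>.trans (le_refl _)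
        _ ≤ n^2 := by nlinarith [Nat.sub_le n 1]
    have := (Nat.cast_le (α := ℝ)).2 h1
    push_cast at this
    linarith
  · have hg := g_pow_le n hu.1 hu.2
    have hgg := gG n u
    have hu2 : (0:ℝ) < u^2 := by positivity
    nlinarith [hgg]

lemma Gf_ge_aux (n : ℕ) {u : ℝ} (h0 : 0 < u) (h2 : u ≤ 2) :
    (n:ℝ)*(1/u) - 2*(1/u^2) ≤ Gf n u := by
  have hgg := gG n u
  have habs : |(1-u)^n| ≤ 1 := by
    rw [abs_pow]
    exact pow_le_one₀ (abs_nonneg _) (by rw [abs_le]; constructor <;> linarith)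
  have hpow : -1 ≤ (1-u)^n := by linarith [neg_abs_le ((1-u)^n)]
  have hu2 : (0:ℝ) < u^2 := by positivity
  have key : (n:ℝ)*u - 2 ≤ u^2 * Gf n u := by nlinarith
  calc (n:ℝ)*(1/u) - 2*(1/u^2) = ((n:ℝ)*u - 2)/u^2 := by field_simp
    _ ≤ Gf n u := by rw [div_le_iff₀ hu2]; nlinarith

lemma Gf_le_aux (n : ℕ) {u : ℝ} (h0 : 0 < u) (h2 : u ≤ 2) :
    Gf n u ≤ (n:ℝ)*(1/u) := by
  have hgg := gG n u
  have hpow : (1-u)^n ≤ 1 := by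
    calc (1-u)^n ≤ |(1-u)^n| := le_abs_self _
      _ = |1-u|^n := by rw [abs_pow]
      _ ≤ 1 := pow_le_one₀ (abs_nonneg _) (by rw [abs_le]; constructor <;> linarith)
  have hu2 : (0:ℝ) < u^2 := by positivity
  have key : u^2 * Gf n u ≤ (n:ℝ)*u := by nlinarith
  rw [show (n:ℝ)*(1/u) = ((n:ℝ)*u)/u^2 by field_simp, le_div_iff₀ hu2]
  nlinarith

lemma int_Gf_1u0 (n : ℕ) {u0 : ℝ} (h0 : 0 < u0) (h2 : u0 < 2) :
    (n:ℝ) * Real.log u0 - 2 ≤ ∫ u in (1:ℝ)..u0, Gf n u := by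
  rcases le_or_gt 1 u0 with h1 | h1
  · have hne : ∀ x ∈ Set.uIcc (1:ℝ) u0, x ≠ 0 := by
      intro x hx
      rw [Set.uIcc_of_le h1] at hx
      exact ne_of_gt (lt_of_lt_of_le one_pos hx.1)
    have hcont : ContinuousOn (fun u:ℝ => (n:ℝ)*(1/u) - 2) (Set.uIcc 1 u0) :=
      (continuousOn_const.mul (continuousOn_const.div continuousOn_id hne)).sub continuousOn_const
    have hint1 : IntervalIntegrable (fun u:ℝ => (n:ℝ)*(1/u) - 2) MeasureTheory.volume 1 u0 :=
      hcont.intervalIntegrable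
    have hint2 : IntervalIntegrable (Gf n) MeasureTheory.volume 1 u0 :=
      (Gf_cont n).intervalIntegrable _ _
    have hlow : ∀ u ∈ Set.Icc (1:ℝ) u0, (n:ℝ)*(1/u) - 2 ≤ Gf n u := by
      intro u hu
      have h0u : 0 < u := lt_of_lt_of_le one_pos hu.1
      have := Gf_ge_aux n h0u (by linarith [hu.2])
      have h1u : 1/u^2 ≤ 1 := by
        rw [div_le_one (by positivity)]
        nlinarith [hu.1]
      nlinarith
    have hmono := intervalIntegral.integral_mono_on h1 hint1 hint2 hlow
    have hintA : IntervalIntegrable (fun u:ℝ => (n:ℝ)*(1/u)) MeasureTheory.volume 1 u0 := by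
      apply ContinuousOn.intervalIntegrable
      exact continuousOn_const.mul (continuousOn_const.div continuousOn_id hne)
    have hval : (∫ u in (1:ℝ)..u0, ((n:ℝ)*(1/u) - 2))
        = (n:ℝ) * Real.log u0 - 2*(u0 - 1) := by
      rw [intervalIntegral.integral_sub hintA (intervalIntegrable_const)]
      rw [intervalIntegral.integral_const_mul, integral_one_div (by
        intro hmem; exact hne 0 hmem rfl), intervalIntegral.integral_const]
      simp [div_one]
      ring
    rw [hval] at hmono
    linarith
  · have h1' : u0 ≤ 1 := le_of_lt h1
    have hne : ∀ x ∈ Set.uIcc (u0:ℝ) 1, x ≠ 0 := by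
      intro x hx
      rw [Set.uIcc_of_le h1'] at hx
      exact ne_of_gt (lt_of_lt_of_le h0 hx.1)
    have hcont : ContinuousOn (fun u:ℝ => (n:ℝ)*(1/u)) (Set.uIcc u0 1) :=
      continuousOn_const.mul (continuousOn_const.div continuousOn_id hne)
    have hup : ∀ u ∈ Set.Icc (u0:ℝ) 1, Gf n u ≤ (n:ℝ)*(1/u) := by
      intro u hu
      exact Gf_le_aux n (lt_of_lt_of_le h0 hu.1) (by linarith [hu.2])
    have hintA : IntervalIntegrable (fun u:ℝ => (n:ℝ)*(1/u)) MeasureTheory.volume u0 1 :=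
      hcont.intervalIntegrable
    have hmono := intervalIntegral.integral_mono_on h1' ((Gf_cont n).intervalIntegrable _ _)
      hintA hup
    have hval : (∫ u in (u0:ℝ)..1, ((n:ℝ)*(1/u)))
        = -((n:ℝ) * Real.log u0) := by
      rw [intervalIntegral.integral_const_mul, integral_one_div (by
        intro hmem; exact hne 0 hmem rfl)]
      rw [one_div, Real.log_inv]
      ring
    rw [hval] at hmono
    rw [intervalIntegral.integral_symm]
    linarith


lemma subst_int (b : ℝ) (hb : 0 ≤ b) (n : ℕ) (M : ℝ) (hM : 1 ≤ M) :
    ∫ x in (1:ℝ)..M, ((2*b+1)/(2*x+b+1))^2 * Gf n ((2*b+1)/(2*x+b+1))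
      = (2*b+1)/2 * ∫ u in ((2*b+1)/(2*M+b+1))..((2*b+1)/(b+3)), Gf n u := by
  have hIcc : Set.uIcc (1:ℝ) M = Set.Icc 1 M := Set.uIcc_of_le hM
  have hne : ∀ x ∈ Set.uIcc (1:ℝ) M, 2*x+b+1 ≠ 0 := by
    intro x hx
    rw [hIcc] at hx
    have h1 := hx.1
    have : (0:ℝ) < 2*x+b+1 := by linarith
    exact ne_of_gt this
  have hderiv : ∀ x ∈ Set.uIcc (1:ℝ) M,
      HasDerivAt (fun x : ℝ => (2*b+1)/(2*x+b+1)) (-2*(2*b+1)/(2*x+b+1)^2) x := by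
    intro x hx
    have h1 : HasDerivAt (fun x : ℝ => 2*x+b+1) 2 x := by
      have := ((hasDerivAt_id x).const_mul (2:ℝ)).add_const (b+1)
      simpa [add_assoc] using this
    have h2 := (h1.inv (hne x hx)).const_mul (2*b+1)
    have h3 : HasDerivAt (fun x : ℝ => (2*b+1)/(2*x+b+1)) ((2*b+1) * (-(2/(2*x+b+1)^2))) x := by
      simpa [div_eq_mul_inv] using h2
    convert h3 using 1
    ring
  have hcont' : ContinuousOn (fun x : ℝ => -2*(2*b+1)/(2*x+b+1)^2) (Set.uIcc 1 M) := by
    apply ContinuousOn.div continuousOn_const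
    · exact Continuous.continuousOn (by continuity)
    · intro x hx
      exact pow_ne_zero 2 (hne x hx)
  have hsub := intervalIntegral.integral_comp_smul_deriv hderiv hcont' (Gf_cont n)
  have heq : ∀ x : ℝ, ((2*b+1)/(2*x+b+1))^2 * Gf n ((2*b+1)/(2*x+b+1))
      = (-(2*b+1)/2) * ((-2*(2*b+1)/(2*x+b+1)^2) • Gf n ((2*b+1)/(2*x+b+1))) := by
    intro x
    rw [smul_eq_mul, div_pow]
    ring
  calc ∫ x in (1:ℝ)..M, ((2*b+1)/(2*x+b+1))^2 * Gf n ((2*b+1)/(2*x+b+1))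
      = ∫ x in (1:ℝ)..M, (-(2*b+1)/2) * ((-2*(2*b+1)/(2*x+b+1)^2) • Gf n ((2*b+1)/(2*x+b+1))) :=
        intervalIntegral.integral_congr (fun x _ => heq x)
    _ = (-(2*b+1)/2) * ∫ x in (1:ℝ)..M, (-2*(2*b+1)/(2*x+b+1)^2) • ((Gf n) ∘ (fun x => (2*b+1)/(2*x+b+1))) x :=
        intervalIntegral.integral_const_mul _ _
    _ = (-(2*b+1)/2) * ∫ u in ((2*b+1)/(2*1+b+1))..((2*b+1)/(2*M+b+1)), Gf n u := by rw [hsub]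
    _ = (2*b+1)/2 * ∫ u in ((2*b+1)/(2*M+b+1))..((2*b+1)/(b+3)), Gf n u := by
        rw [intervalIntegral.integral_symm]
        have : 2*(1:ℝ)+b+1 = b+3 := by ring
        rw [this]
        ring


lemma int_Gf_0eps (n : ℕ) {ε : ℝ} (h0 : 0 ≤ ε) (h1 : ε ≤ 1) :
    ∫ u in (0:ℝ)..ε, Gf n u ≤ (n:ℝ)^2/2 * ε := by
  have hmono := intervalIntegral.integral_mono_on h0 ((Gf_cont n).intervalIntegrable _ _)
    (intervalIntegrable_const (μ := MeasureTheory.volume) (c := (n:ℝ)^2/2))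
    (fun u hu => Gf_le_half n u ⟨hu.1, le_trans hu.2 h1⟩)
  rw [intervalIntegral.integral_const, smul_eq_mul, sub_zero] at hmono
  linarith [hmono]

lemma harmonic_ge (n : ℕ) (hn : 1 ≤ n) : Real.log n + Real.eulerMascheroniConstant ≤ Hn n := by
  have h := Real.eulerMascheroniConstant_lt_eulerMascheroniSeq' n
  rw [Real.eulerMascheroniSeq', if_neg (by omega : n ≠ 0)] at h
  have hcast : ((harmonic n : ℚ) : ℝ) = Hn n := by
    rw [harmonic, Hn]
    push_cast
    exact Finset.sum_congr rfl fun i _ => by rw [one_div]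
  rw [hcast] at h
  linarith

theorem generalized_li_sum_lower_bound (b : ℝ) (hb : 0 ≤ b) :
    ∃ C : ℝ, ∃ N : ℕ, ∀ n : ℕ, N ≤ n →
      ((2 * b + 1) / 2) * ((n : ℝ) * Real.log n + n * Real.eulerMascheroniConstant - n
          + n * Real.log (2 - 5 / (b + 3))) - C ≤
        ∑' k : ℕ, ((1 - (2 * b + 1) / (2 * ((k : ℝ) + 1) + b + 1)) ^ n - 1
          + n * (2 * b + 1) / (2 * ((k : ℝ) + 1) + b + 1)) := by
  refine ⟨(2*b+1) + (2*b+1)^2/8, ⌈b⌉₊ + 1, fun n hn => ?_⟩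
  have hb3 : (0:ℝ) < b + 3 := by linarith
  have ha0 : (0:ℝ) < 2*b+1 := by linarith
  have hn1 : 1 ≤ n := le_trans (Nat.le_add_left 1 _) hn
  have hnR : (1:ℝ) ≤ n := by exact_mod_cast hn1
  have hnb : (b:ℝ) ≤ n := by
    calc b ≤ (⌈b⌉₊ : ℝ) := Nat.le_ceil b
      _ ≤ n := by exact_mod_cast Nat.le_of_succ_le hn
  set u0 : ℝ := (2*b+1)/(b+3) with hu0_def
  have hu0pos : 0 < u0 := by positivity
  have hu0lt2 : u0 < 2 := by rw [hu0_def, div_lt_iff₀ hb3]; linarith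
  have hu0eq : (2 : ℝ) - 5/(b+3) = u0 := by rw [hu0_def]; field_simp; ring
  -- denominators
  have hden : ∀ x : ℝ, 1 ≤ x → (0:ℝ) < 2*x+b+1 := fun x hx => by linarith
  have hy_pos : ∀ x : ℝ, 1 ≤ x → 0 < (2*b+1)/(2*x+b+1) := fun x hx => by
    exact div_pos ha0 (hden x hx)
  have hy_le : ∀ x : ℝ, 1 ≤ x → (2*b+1)/(2*x+b+1) ≤ u0 := by
    intro x hx
    rw [hu0_def]
    exact div_le_div_of_nonneg_left ha0.le hb3 (by linarith)
  -- the summand function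
  set f : ℕ → ℝ := fun k => (1 - (2*b+1)/(2*((k:ℝ)+1)+b+1))^n - 1
      + n*((2*b+1)/(2*((k:ℝ)+1)+b+1)) with hf_def
  have hk1 : ∀ k : ℕ, (1:ℝ) ≤ (k:ℝ)+1 := fun k => by
    have : (0:ℝ) ≤ k := Nat.cast_nonneg k
    linarith
  have hf_nonneg : ∀ k, 0 ≤ f k := by
    intro k
    exact g_nonneg n (le_trans (hy_le ((k:ℝ)+1) (hk1 k)) hu0lt2.le)
  -- summability
  have hbase : Summable (fun k : ℕ => (1:ℝ)/((k:ℝ)+1)^2) := by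
    have h1 : Summable (fun k : ℕ => (1:ℝ)/(k:ℝ)^2) := by
      rw [summable_one_div_nat_pow]
      omega
    have h2 := (summable_nat_add_iff 1).2 h1
    apply h2.congr
    intro k
    push_cast
    ring
  have hf_le : ∀ k : ℕ, f k ≤ ((n:ℝ)^2*(2*b+1)^2) * ((1:ℝ)/((k:ℝ)+1)^2) := by
    intro k
    have hyk := hy_pos ((k:ℝ)+1) (hk1 k)
    have hle2 := le_trans (hy_le ((k:ℝ)+1) (hk1 k)) hu0lt2.le
    have h1 := g_le2 n hyk.le hle2
    refine le_trans h1 ?_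
    have hd : (0:ℝ) < 2*((k:ℝ)+1)+b+1 := hden _ (hk1 k)
    have hyb : (2*b+1)/(2*((k:ℝ)+1)+b+1) ≤ (2*b+1)/((k:ℝ)+1) := by
      apply div_le_div_of_nonneg_left ha0.le (by linarith [hk1 k]) (by linarith [hk1 k])
    have hsq : ((2*b+1)/(2*((k:ℝ)+1)+b+1))^2 ≤ ((2*b+1)/((k:ℝ)+1))^2 := by
      apply pow_le_pow_left₀ hyk.le hyb
    calc (n:ℝ)^2 * ((2*b+1)/(2*((k:ℝ)+1)+b+1))^2 ≤ (n:ℝ)^2 * ((2*b+1)/((k:ℝ)+1))^2 := by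
          apply mul_le_mul_of_nonneg_left hsq (by positivity)
      _ = ((n:ℝ)^2*(2*b+1)^2) * ((1:ℝ)/((k:ℝ)+1)^2) := by
          rw [div_pow]
          ring
  have hsummable : Summable f := by
    apply Summable.of_nonneg_of_le hf_nonneg hf_le
    exact hbase.mul_left _
  -- sum ≥ finite sum ≥ integral
  set M : ℕ := n^2 with hM_def
  have hfin : ∑ i ∈ Finset.range M, f i ≤ ∑' k, f k :=
    Summable.sum_le_tsum _ (fun i _ => hf_nonneg i) hsummable
  -- antitone on [1, 1+M]
  have hanti : AntitoneOn (fun x : ℝ => (1 - (2*b+1)/(2*x+b+1))^n - 1 + n*((2*b+1)/(2*x+b+1)))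
      (Set.Icc 1 (1 + (M:ℝ))) := by
    intro x hx y hy hxy
    have hx1 : (1:ℝ) ≤ x := hx.1
    have hy1 : (1:ℝ) ≤ y := hy.1
    have hmemx : (2*b+1)/(2*x+b+1) ∈ Set.Icc (0:ℝ) 2 :=
      ⟨(hy_pos x hx1).le, le_trans (hy_le x hx1) hu0lt2.le⟩
    have hmemy : (2*b+1)/(2*y+b+1) ∈ Set.Icc (0:ℝ) 2 :=
      ⟨(hy_pos y hy1).le, le_trans (hy_le y hy1) hu0lt2.le⟩
    have hle : (2*b+1)/(2*y+b+1) ≤ (2*b+1)/(2*x+b+1) := by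
      apply div_le_div_of_nonneg_left ha0.le (by linarith) (by linarith)
    exact g_mono n hmemy hmemx hle
  have hint_le_sum := AntitoneOn.integral_le_sum (x₀ := 1) (a := M) hanti
  have hterm : ∀ i : ℕ, (1 - (2*b+1)/(2*(1+(i:ℝ))+b+1))^n - 1 + n*((2*b+1)/(2*(1+(i:ℝ))+b+1)) = f i := by
    intro i
    rw [hf_def]
    rw [show 2*(1+(i:ℝ))+b+1 = 2*((i:ℝ)+1)+b+1 by ring]
  have hsum_eq : ∑ i ∈ Finset.range M,
      ((1 - (2*b+1)/(2*(1+(i:ℝ))+b+1))^n - 1 + n*((2*b+1)/(2*(1+(i:ℝ))+b+1))) = ∑ i ∈ Finset.range M, f i :=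
    Finset.sum_congr rfl fun i _ => hterm i
  -- integral evaluation
  set X : ℝ := 1 + (M:ℝ) with hX_def
  have hX1 : (1:ℝ) ≤ X := by
    rw [hX_def]
    have : (0:ℝ) ≤ M := Nat.cast_nonneg M
    linarith
  have hcongr : ∫ x in (1:ℝ)..X, ((1 - (2*b+1)/(2*x+b+1))^n - 1 + n*((2*b+1)/(2*x+b+1)))
      = ∫ x in (1:ℝ)..X, ((2*b+1)/(2*x+b+1))^2 * Gf n ((2*b+1)/(2*x+b+1)) :=
    intervalIntegral.integral_congr (fun x _ => gG n _)
  set ε : ℝ := (2*b+1)/(2*X+b+1) with hε_def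
  have hε_pos : 0 < ε := hy_pos X hX1
  have hMn : (n:ℝ)^2 ≤ (M:ℝ) := by
    rw [hM_def]
    push_cast
    exact le_refl _
  have hnn2 : (n:ℝ) ≤ (n:ℝ)^2 := by nlinarith
  have hsubst := subst_int b hb n X hX1
  -- integrability
  have hi : ∀ p q : ℝ, IntervalIntegrable (Gf n) MeasureTheory.volume p q :=
    fun p q => (Gf_cont n).intervalIntegrable p q
  have hsplit1 : (∫ u in (0:ℝ)..ε, Gf n u) + (∫ u in ε..u0, Gf n u) = ∫ u in (0:ℝ)..u0, Gf n u :=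
    intervalIntegral.integral_add_adjacent_intervals (hi 0 ε) (hi ε u0)
  have hsplit2 : (∫ u in (0:ℝ)..1, Gf n u) + (∫ u in (1:ℝ)..u0, Gf n u) = ∫ u in (0:ℝ)..u0, Gf n u :=
    intervalIntegral.integral_add_adjacent_intervals (hi 0 1) (hi 1 u0)
  have h01 := int_Gf_01 n hn1
  have h1u0 := int_Gf_1u0 n hu0pos hu0lt2
  have hdenX : (0:ℝ) < 2*X+b+1 := hden X hX1
  have hε1 : ε ≤ 1 := by
    rw [hε_def, div_le_one hdenX, hX_def]
    push_cast [hM_def]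
    nlinarith
  have h0ε := int_Gf_0eps n hε_pos.le hε1
  have hεsmall : (n:ℝ)^2/2 * ε ≤ (2*b+1)/4 := by
    have hεle : ε ≤ (2*b+1)/(2*(n:ℝ)^2) := by
      rw [hε_def]
      apply div_le_div_of_nonneg_left ha0.le (by positivity)
      rw [hX_def]
      push_cast [hM_def]
      nlinarith
    have hn2pos : (0:ℝ) < (n:ℝ)^2 := by positivity
    calc (n:ℝ)^2/2 * ε ≤ (n:ℝ)^2/2 * ((2*b+1)/(2*(n:ℝ)^2)) := by
          apply mul_le_mul_of_nonneg_left hεle (by positivity)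
      _ = (2*b+1)/4 := by field_simp; ring
  have hHn := harmonic_ge n hn1
  -- combine integral bounds
  have hIval : (n:ℝ)*Hn n - n + ((n:ℝ)*Real.log u0 - 2) - (n:ℝ)^2/2*ε ≤ ∫ u in ε..u0, Gf n u := by
    linarith
  -- chain
  have hchain : (2*b+1)/2 * ((n:ℝ)*Hn n - n + ((n:ℝ)*Real.log u0 - 2) - (n:ℝ)^2/2*ε) ≤ ∑' k, f k := by
    have c1 : (2*b+1)/2 * ((n:ℝ)*Hn n - n + ((n:ℝ)*Real.log u0 - 2) - (n:ℝ)^2/2*ε)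
        ≤ (2*b+1)/2 * ∫ u in ε..u0, Gf n u :=
      mul_le_mul_of_nonneg_left hIval (by positivity)
    have c2 : (2*b+1)/2 * (∫ u in ε..u0, Gf n u)
        = ∫ x in (1:ℝ)..X, ((1 - (2*b+1)/(2*x+b+1))^n - 1 + n*((2*b+1)/(2*x+b+1))) := by
      rw [hcongr, hsubst]
    have c3 : (∫ x in (1:ℝ)..X, ((1 - (2*b+1)/(2*x+b+1))^n - 1 + n*((2*b+1)/(2*x+b+1))))
        ≤ ∑ i ∈ Finset.range M, f i := by
      rw [← hsum_eq]
      exact hint_le_sum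
    linarith
  -- identify the tsum
  have htsum_eq : ∑' k : ℕ, ((1 - (2 * b + 1) / (2 * ((k : ℝ) + 1) + b + 1)) ^ n - 1
      + n * (2 * b + 1) / (2 * ((k : ℝ) + 1) + b + 1)) = ∑' k, f k :=
    tsum_congr fun k => by rw [hf_def]; ring
  rw [htsum_eq, hu0eq]
  have hkey : 0 ≤ (2*b+1)/2 * ((n:ℝ) * (Hn n - Real.log n - Real.eulerMascheroniConstant)) := by
    apply mul_nonneg (by positivity)
    apply mul_nonneg (Nat.cast_nonneg n)
    linarith
  have hmul : (2*b+1)/2 * ((n:ℝ)*Hn n - n + (n:ℝ)*Real.log u0 - 2 - (2*b+1)/4)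
      ≤ (2*b+1)/2 * ((n:ℝ)*Hn n - n + ((n:ℝ)*Real.log u0 - 2) - (n:ℝ)^2/2*ε) :=
    mul_le_mul_of_nonneg_left (by linarith) (by positivity)
  have expand : (2*b+1)/2 * ((n:ℝ)*Hn n - n + (n:ℝ)*Real.log u0 - 2 - (2*b+1)/4)
      = (2*b+1)/2 * ((n:ℝ)*Real.log n + (n:ℝ)*Real.eulerMascheroniConstant - n + (n:ℝ)*Real.log u0)
        - ((2*b+1) + (2*b+1)^2/8)
        + (2*b+1)/2 * ((n:ℝ)*(Hn n - Real.log n - Real.eulerMascheroniConstant)) := by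
    ring
  linarith
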